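/- arXiv:1702.00980 — 2 statements merged into one kernel-verified Lean document; each statement's English description precedes it below -/
import Mathlib

section
/- Over the max-plus semiring, if A is an invertible (monomial) n×n matrix over ℝ_max, then for every n×n matrix B and every k with 1 ≤ k ≤ n, the Cauchy–Binet equality (A⊙B)^{∧k} = A^{∧k} ⊙ B^{∧k} holds, and (A^{−1})^{∧k} = (A^{∧k})^{−1}, i.e. the k-th compound of A is invertible with inverse the k-th compound of A^{−1}. The analogous equality (B⊙A)^{∧k} = B^{∧k} ⊙ A^{∧k} also holds. -/
open Matrix

noncomputable section

/-- The max-plus semiring `ℝ_max = ℝ ∪ {−∞}`: addition is `max` (the lattice `⊔`),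
multiplication is `+` with `⊥ = −∞` absorbing. -/
abbrev Rmax : Type := WithBot ℝ

/-- Tropical matrix product: `(A ⊙ B) i j = max_t (A i t + B t j)`. -/
def tropMul {l m p : Type*} [Fintype m] (A : Matrix l m Rmax) (B : Matrix m p Rmax) :
    Matrix l p Rmax :=
  Matrix.of fun i j => Finset.univ.sup fun t => A i t + B t j

/-- The tropical identity matrix: `0` on the diagonal, `−∞` elsewhere. -/
def tropId (m : Type*) [DecidableEq m] : Matrix m m Rmax :=
  Matrix.of fun i j => if i = j then (0 : Rmax) else ⊥

/-- Tropical permanent: maximum over permutations of the sum of the selected entries. -/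
def tropPer {m : Type*} [Fintype m] [DecidableEq m] (A : Matrix m m Rmax) : Rmax :=
  Finset.univ.sup fun σ : Equiv.Perm m => ∑ i, A i (σ i)

/-- Tropical trace: maximum of the diagonal entries. -/
def tropTrace {m : Type*} [Fintype m] (A : Matrix m m Rmax) : Rmax :=
  Finset.univ.sup fun i => A i i

/-- The type of `k`-element subsets of `{1,…,n}`. -/
abbrev KSub (n k : ℕ) : Type := {I : Finset (Fin n) // I.card = k}

/-- The `k`-th compound matrix: indexed by `k`-element subsets; the `(I,J)` entry is the
maximum over bijections `σ : I → J` of `∑_{i ∈ I} A i (σ i)`. -/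
def compound {n : ℕ} (k : ℕ) (A : Matrix (Fin n) (Fin n) Rmax) :
    Matrix (KSub n k) (KSub n k) Rmax :=
  Matrix.of fun I J =>
    Finset.univ.sup fun σ : {x // x ∈ I.1} ≃ {x // x ∈ J.1} =>
      ∑ i : {x // x ∈ I.1}, A i.1 (σ i).1

/-- Tropical adjoint: `adj(A) i j = per(A_{(j,i)})`, deleting row `j` and column `i`. -/
def tropAdj {n : ℕ} (A : Matrix (Fin (n+1)) (Fin (n+1)) Rmax) :
    Matrix (Fin (n+1)) (Fin (n+1)) Rmax :=
  Matrix.of fun i j => tropPer (A.submatrix j.succAbove i.succAbove)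

/-- Quasi-inverse `A^∇` of a nonsingular matrix: `(A^∇) i j = adj(A) i j − per(A)`. -/
def tropQInv {n : ℕ} (A : Matrix (Fin (n+1)) (Fin (n+1)) Rmax) :
    Matrix (Fin (n+1)) (Fin (n+1)) Rmax :=
  Matrix.of fun i j => tropAdj A i j + ((- (WithBot.unbotD 0 (tropPer A)) : ℝ) : Rmax)

/-- A matrix over `ℝ_max` is invertible iff it is a monomial (generalized permutation) matrix. -/
def IsMonomial {n : ℕ} (A : Matrix (Fin n) (Fin n) Rmax) : Prop :=
  ∃ (π : Equiv.Perm (Fin n)) (d : Fin n → ℝ),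
    ∀ i j, A i j = if j = π i then ((d i : ℝ) : Rmax) else ⊥

/-- `m`-fold tropical power of a square matrix (`A^{⊙0}` is the tropical identity). -/
def tropPow {m : Type*} [Fintype m] [DecidableEq m] (A : Matrix m m Rmax) : ℕ → Matrix m m Rmax
  | 0 => tropId m
  | k + 1 => tropMul (tropPow A k) A

section Helpers

lemma sup_eq_of_unique {α : Type*} [Fintype α] (f : α → Rmax) (a : α)
    (h : ∀ b, b ≠ a → f b = ⊥) : Finset.univ.sup f = f a := by
  apply le_antisymm
  · refine Finset.sup_le fun b _ => ?_
    by_cases hb : b = a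
    · subst hb; exact le_rfl
    · rw [h b hb]; exact bot_le
  · exact Finset.le_sup (Finset.mem_univ a)

lemma sup_comp_equiv {α β : Type*} [Fintype α] [Fintype β] (e : α ≃ β) (f : β → Rmax) :
    (Finset.univ.sup fun a => f (e a)) = Finset.univ.sup f := by
  apply le_antisymm
  · exact Finset.sup_le fun a _ => Finset.le_sup (Finset.mem_univ (e a))
  · refine Finset.sup_le fun b _ => ?_
    have := Finset.le_sup (f := fun a => f (e a)) (Finset.mem_univ (e.symm b))
    simpa using this

lemma add_sup' {α : Type*} (s : Finset α) (c : Rmax) (f : α → Rmax) :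
    c + s.sup f = s.sup fun a => c + f a := by
  rcases s.eq_empty_or_nonempty with h | h
  · subst h; simp
  · obtain ⟨a, ha, hsup⟩ := Finset.exists_mem_eq_sup s h f
    rw [hsup]
    apply le_antisymm
    · exact Finset.le_sup (f := fun a => c + f a) ha
    · exact Finset.sup_le fun b hb => add_le_add_right (hsup ▸ Finset.le_sup hb) c

lemma sup_add' {α : Type*} (s : Finset α) (c : Rmax) (f : α → Rmax) :
    s.sup f + c = s.sup fun a => f a + c := by
  rcases s.eq_empty_or_nonempty with h | h
  · subst h; simp
  · obtain ⟨a, ha, hsup⟩ := Finset.exists_mem_eq_sup s h f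
    rw [hsup]
    apply le_antisymm
    · exact Finset.le_sup (f := fun a => f a + c) ha
    · exact Finset.sup_le fun b hb => add_le_add_left (hsup ▸ Finset.le_sup hb) c

lemma sum_eq_bot' {α : Type*} [DecidableEq α] {s : Finset α} {f : α → Rmax} {a : α} (ha : a ∈ s)
    (h : f a = ⊥) : ∑ i ∈ s, f i = ⊥ := by
  rw [← Finset.add_sum_erase s f ha, h, WithBot.bot_add]

lemma coe_sum' {α : Type*} (s : Finset α) (f : α → ℝ) :
    ((∑ i ∈ s, f i : ℝ) : Rmax) = ∑ i ∈ s, ((f i : ℝ) : Rmax) := by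
  induction s using Finset.cons_induction with
  | empty => simp
  | cons a s ha ih => rw [Finset.sum_cons, Finset.sum_cons, WithBot.coe_add, ih]

/-- The image of a `k`-subset under a permutation. -/
def mapK {n k : ℕ} (π : Equiv.Perm (Fin n)) (I : KSub n k) : KSub n k :=
  ⟨I.1.image π, by rw [Finset.card_image_of_injective _ π.injective, I.2]⟩

lemma mapK_mapK_symm {n k : ℕ} (π : Equiv.Perm (Fin n)) (I : KSub n k) :
    mapK π (mapK π.symm I) = I := by
  apply Subtype.ext
  simp [mapK, Finset.image_image]

lemma mapK_symm_mapK {n k : ℕ} (π : Equiv.Perm (Fin n)) (I : KSub n k) :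
    mapK π.symm (mapK π I) = I := by
  have := mapK_mapK_symm π.symm I
  rwa [Equiv.symm_symm] at this

/-- The equivalence between a subset and its image. -/
def eqvK {n k : ℕ} (π : Equiv.Perm (Fin n)) (I : KSub n k) :
    {x // x ∈ I.1} ≃ {x // x ∈ (mapK π I).1} :=
  Equiv.subtypeEquiv π fun x => by
    constructor
    · exact fun h => Finset.mem_image_of_mem _ h
    · intro h
      obtain ⟨y, hy, hyx⟩ := Finset.mem_image.mp h
      rwa [← π.injective hyx]

@[simp] lemma eqvK_coe {n k : ℕ} (π : Equiv.Perm (Fin n)) (I : KSub n k)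
    (x : {x // x ∈ I.1}) : ((eqvK π I x : {x // x ∈ (mapK π I).1}) : Fin n) = π x.1 := rfl

/-- The value of a monomial matrix summed over a subset. -/
def Dsum {n k : ℕ} (d : Fin n → ℝ) (I : KSub n k) : Rmax :=
  ((∑ i : {x // x ∈ I.1}, d i.1 : ℝ) : Rmax)

/-- `A` is the monomial matrix with permutation `π` and values `d`. -/
def Mono {n : ℕ} (A : Matrix (Fin n) (Fin n) Rmax) (π : Equiv.Perm (Fin n))
    (d : Fin n → ℝ) : Prop :=
  ∀ i j, A i j = if j = π i then ((d i : ℝ) : Rmax) else ⊥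

section MonoLemmas

variable {n k : ℕ} {π : Equiv.Perm (Fin n)} {d : Fin n → ℝ}
  {A : Matrix (Fin n) (Fin n) Rmax}

lemma tropMul_mono_left (hA : Mono A π d) (B : Matrix (Fin n) (Fin n) Rmax) (i j : Fin n) :
    tropMul A B i j = ((d i : ℝ) : Rmax) + B (π i) j := by
  show (Finset.univ.sup fun t => A i t + B t j) = _
  rw [sup_eq_of_unique _ (π i)]
  · rw [hA, if_pos rfl]
  · intro t ht; rw [hA, if_neg ht, WithBot.bot_add]

lemma tropMul_mono_right (hA : Mono A π d) (B : Matrix (Fin n) (Fin n) Rmax) (i j : Fin n) :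
    tropMul B A i j = B i (π.symm j) + ((d (π.symm j) : ℝ) : Rmax) := by
  show (Finset.univ.sup fun t => B i t + A t j) = _
  rw [sup_eq_of_unique _ (π.symm j)]
  · rw [hA, if_pos (π.apply_symm_apply j).symm]
  · intro t ht
    rw [hA, if_neg, WithBot.add_bot]
    intro h
    exact ht (by rw [h, Equiv.symm_apply_apply])

lemma compound_mono (hA : Mono A π d) (I J : KSub n k) :
    compound k A I J = if J = mapK π I then Dsum d I else ⊥ := by
  show (Finset.univ.sup fun σ : {x // x ∈ I.1} ≃ {x // x ∈ J.1} =>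
      ∑ i : {x // x ∈ I.1}, A i.1 (σ i).1) = _
  by_cases hJ : J = mapK π I
  · subst hJ
    rw [if_pos rfl]
    apply le_antisymm
    · refine Finset.sup_le fun σ _ => ?_
      calc ∑ i : {x // x ∈ I.1}, A i.1 (σ i).1
          ≤ ∑ i : {x // x ∈ I.1}, ((d i.1 : ℝ) : Rmax) := by
            refine Finset.sum_le_sum fun i _ => ?_
            rw [hA]
            split <;> simp
        _ = Dsum d I := (coe_sum' _ _).symm
    · have hle := Finset.le_sup
        (f := fun σ : {x // x ∈ I.1} ≃ {x // x ∈ (mapK π I).1} =>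
          ∑ i : {x // x ∈ I.1}, A i.1 (σ i).1) (Finset.mem_univ (eqvK π I))
      refine le_trans (le_of_eq ?_) hle
      rw [Dsum, coe_sum']
      refine Finset.sum_congr rfl fun i _ => ?_
      rw [hA, eqvK_coe, if_pos rfl]
  · rw [if_neg hJ]
    refine le_antisymm (Finset.sup_le fun σ _ => ?_) bot_le
    by_cases hall : ∀ i : {x // x ∈ I.1}, ((σ i : Fin n)) = π i.1
    · exfalso
      apply hJ
      apply Subtype.ext
      have hsub : I.1.image π ⊆ J.1 := by
        intro t ht
        obtain ⟨a, ha, rfl⟩ := Finset.mem_image.mp ht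
        rw [← hall ⟨a, ha⟩]
        exact (σ ⟨a, ha⟩).2
      refine (Finset.eq_of_subset_of_card_le hsub ?_).symm
      rw [Finset.card_image_of_injective _ π.injective, I.2, J.2]
    · push_neg at hall
      obtain ⟨i, hi⟩ := hall
      rw [sum_eq_bot' (Finset.mem_univ i) (by rw [hA, if_neg hi])]

lemma compound_tropMul_left (hA : Mono A π d) (B : Matrix (Fin n) (Fin n) Rmax)
    (I J : KSub n k) :
    compound k (tropMul A B) I J = Dsum d I + compound k B (mapK π I) J := by
  show (Finset.univ.sup fun σ : {x // x ∈ I.1} ≃ {x // x ∈ J.1} =>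
      ∑ i : {x // x ∈ I.1}, tropMul A B i.1 (σ i).1) = _
  have h1 : ∀ σ : {x // x ∈ I.1} ≃ {x // x ∈ J.1},
      (∑ i : {x // x ∈ I.1}, tropMul A B i.1 (σ i).1)
        = Dsum d I + ∑ i : {x // x ∈ I.1}, B (π i.1) (σ i).1 := by
    intro σ
    calc ∑ i : {x // x ∈ I.1}, tropMul A B i.1 (σ i).1
        = ∑ i : {x // x ∈ I.1}, (((d i.1 : ℝ) : Rmax) + B (π i.1) (σ i).1) :=
          Finset.sum_congr rfl fun i _ => tropMul_mono_left hA B _ _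
      _ = (∑ i : {x // x ∈ I.1}, ((d i.1 : ℝ) : Rmax))
            + ∑ i : {x // x ∈ I.1}, B (π i.1) (σ i).1 := Finset.sum_add_distrib
      _ = Dsum d I + ∑ i : {x // x ∈ I.1}, B (π i.1) (σ i).1 := by rw [Dsum, coe_sum']
  rw [Finset.sup_congr rfl fun σ _ => h1 σ, ← add_sup']
  congr 1
  show _ = Finset.univ.sup fun τ : {x // x ∈ (mapK π I).1} ≃ {x // x ∈ J.1} =>
      ∑ t : {x // x ∈ (mapK π I).1}, B t.1 (τ t).1
  rw [← sup_comp_equiv (Equiv.equivCongr (eqvK π I) (Equiv.refl _))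
    (fun τ : {x // x ∈ (mapK π I).1} ≃ {x // x ∈ J.1} =>
      ∑ t : {x // x ∈ (mapK π I).1}, B t.1 (τ t).1)]
  refine Finset.sup_congr rfl fun σ _ => ?_
  refine Fintype.sum_equiv (eqvK π I) _ _ fun i => ?_
  simp

lemma tropMul_compound_left (hA : Mono A π d) (M : Matrix (KSub n k) (KSub n k) Rmax)
    (I J : KSub n k) :
    tropMul (compound k A) M I J = Dsum d I + M (mapK π I) J := by
  show (Finset.univ.sup fun K => compound k A I K + M K J) = _
  rw [sup_eq_of_unique _ (mapK π I)]
  · rw [compound_mono hA, if_pos rfl]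
  · intro K hK
    rw [compound_mono hA, if_neg hK, WithBot.bot_add]

lemma compound_tropMul_right (hA : Mono A π d) (B : Matrix (Fin n) (Fin n) Rmax)
    (I J : KSub n k) :
    compound k (tropMul B A) I J
      = compound k B I (mapK π.symm J) + Dsum d (mapK π.symm J) := by
  show (Finset.univ.sup fun σ : {x // x ∈ I.1} ≃ {x // x ∈ J.1} =>
      ∑ i : {x // x ∈ I.1}, tropMul B A i.1 (σ i).1) = _
  have h1 : ∀ σ : {x // x ∈ I.1} ≃ {x // x ∈ J.1},
      (∑ i : {x // x ∈ I.1}, tropMul B A i.1 (σ i).1)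
        = (∑ i : {x // x ∈ I.1}, B i.1 (π.symm (σ i).1)) + Dsum d (mapK π.symm J) := by
    intro σ
    calc ∑ i : {x // x ∈ I.1}, tropMul B A i.1 (σ i).1
        = ∑ i : {x // x ∈ I.1}, (B i.1 (π.symm (σ i).1)
            + ((d (π.symm (σ i).1) : ℝ) : Rmax)) :=
          Finset.sum_congr rfl fun i _ => tropMul_mono_right hA B _ _
      _ = (∑ i : {x // x ∈ I.1}, B i.1 (π.symm (σ i).1))
            + ∑ i : {x // x ∈ I.1}, ((d (π.symm (σ i).1) : ℝ) : Rmax) :=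
          Finset.sum_add_distrib
      _ = (∑ i : {x // x ∈ I.1}, B i.1 (π.symm (σ i).1)) + Dsum d (mapK π.symm J) := by
          congr 1
          rw [Dsum, coe_sum']
          exact Fintype.sum_equiv (σ.trans (eqvK π.symm J)) _ _ fun i => by simp
  rw [Finset.sup_congr rfl fun σ _ => h1 σ, ← sup_add']
  congr 1
  show _ = Finset.univ.sup fun τ : {x // x ∈ I.1} ≃ {x // x ∈ (mapK π.symm J).1} =>
      ∑ i : {x // x ∈ I.1}, B i.1 (τ i).1
  rw [← sup_comp_equiv (Equiv.equivCongr (Equiv.refl _) (eqvK π.symm J))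
    (fun τ : {x // x ∈ I.1} ≃ {x // x ∈ (mapK π.symm J).1} =>
      ∑ i : {x // x ∈ I.1}, B i.1 (τ i).1)]
  refine Finset.sup_congr rfl fun σ _ => Finset.sum_congr rfl fun i _ => ?_
  simp

lemma tropMul_compound_right (hA : Mono A π d) (M : Matrix (KSub n k) (KSub n k) Rmax)
    (I J : KSub n k) :
    tropMul M (compound k A) I J = M I (mapK π.symm J) + Dsum d (mapK π.symm J) := by
  show (Finset.univ.sup fun K => M I K + compound k A K J) = _
  rw [sup_eq_of_unique _ (mapK π.symm J)]
  · rw [compound_mono hA, if_pos (mapK_mapK_symm π J).symm]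
  · intro K hK
    rw [compound_mono hA, if_neg, WithBot.add_bot]
    intro h
    exact hK (by rw [h, mapK_symm_mapK])

end MonoLemmas

end Helpers

/-- for invertible (monomial) `A`, Cauchy–Binet becomes an equality
`(A⊙B)^{∧k} = A^{∧k} ⊙ B^{∧k}` (and similarly `(B⊙A)^{∧k} = B^{∧k} ⊙ A^{∧k}`),
and `(A^{−1})^{∧k} = (A^{∧k})^{−1}`. -/
theorem compound_mul_of_monomial {n k : ℕ} (hk1 : 1 ≤ k) (hk2 : k ≤ n)
    (A B Ainv : Matrix (Fin n) (Fin n) Rmax)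
    (hA : IsMonomial A)
    (h1 : tropMul A Ainv = tropId (Fin n))
    (h2 : tropMul Ainv A = tropId (Fin n)) :
    compound k (tropMul A B) = tropMul (compound k A) (compound k B) ∧
    compound k (tropMul B A) = tropMul (compound k B) (compound k A) ∧
    tropMul (compound k A) (compound k Ainv) = tropId (KSub n k) ∧
    tropMul (compound k Ainv) (compound k A) = tropId (KSub n k) := by
  obtain ⟨π, d, hAd⟩ := hA
  have hA' : Mono A π d := hAd
  set d' : Fin n → ℝ := fun i => -(d (π.symm i)) with hd'
  have hAinv : Mono Ainv π.symm d' := by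
    intro i j
    have key : Ainv i j + ((d j : ℝ) : Rmax) = if i = π j then (0 : Rmax) else ⊥ := by
      have hfun := congrFun (congrFun h2 i) (π j)
      have hm : tropMul Ainv A i (π j) = Ainv i j + ((d j : ℝ) : Rmax) := by
        show (Finset.univ.sup fun t => Ainv i t + A t (π j)) = _
        rw [sup_eq_of_unique _ j]
        · rw [hAd, if_pos rfl]
        · intro t ht
          rw [hAd, if_neg, WithBot.add_bot]
          intro h
          exact ht (π.injective h.symm)
      rw [hm] at hfun
      rw [hfun]
      rfl
    by_cases hij : j = π.symm i
    · have hiπ : i = π j := by rw [hij, π.apply_symm_apply]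
      rw [if_pos hij]
      rw [if_pos hiπ] at key
      have hnb : Ainv i j ≠ ⊥ := by
        intro hb
        rw [hb, WithBot.bot_add] at key
        exact absurd key.symm (by simp)
      obtain ⟨r, hr⟩ := WithBot.ne_bot_iff_exists.mp hnb
      rw [← hr, ← WithBot.coe_add] at key
      have hr0 : r + d j = 0 := by exact_mod_cast key
      rw [← hr]
      have : r = d' i := by rw [hd'];  simp only [← hij]; linarith
      exact_mod_cast this
    · rw [if_neg hij]
      have hiπ : i ≠ π j := fun h => hij (by rw [h, Equiv.symm_apply_apply])
      rw [if_neg hiπ] at key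
      rcases WithBot.add_eq_bot.mp key with h | h
      · exact h
      · exact absurd h WithBot.coe_ne_bot
  have hDD : ∀ I : KSub n k, Dsum d I + Dsum d' (mapK π I) = (0 : Rmax) := by
    intro I
    rw [Dsum, Dsum, ← WithBot.coe_add, ← WithBot.coe_zero]
    congr 1
    have h2' : (∑ t : {x // x ∈ (mapK π I).1}, d' t.1)
        = ∑ i : {x // x ∈ I.1}, -(d i.1) := by
      refine (Fintype.sum_equiv (eqvK π I) _ _ fun i => ?_).symm
      simp [hd']
    rw [h2', Finset.sum_neg_distrib, add_neg_cancel]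
  have hDD' : ∀ I : KSub n k, Dsum d' I + Dsum d (mapK π.symm I) = (0 : Rmax) := by
    intro I
    rw [Dsum, Dsum, ← WithBot.coe_add, ← WithBot.coe_zero]
    congr 1
    have h2' : (∑ t : {x // x ∈ (mapK π.symm I).1}, d t.1)
        = ∑ i : {x // x ∈ I.1}, d (π.symm i.1) := by
      refine (Fintype.sum_equiv (eqvK π.symm I) _ _ fun i => ?_).symm
      simp
    rw [h2', ← Finset.sum_add_distrib]
    simp [hd']
  refine ⟨?_, ?_, ?_, ?_⟩
  · ext I J
    rw [compound_tropMul_left hA' B I J, tropMul_compound_left hA' (compound k B) I J]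
  · ext I J
    rw [compound_tropMul_right hA' B I J, tropMul_compound_right hA' (compound k B) I J]
  · ext I J
    rw [tropMul_compound_left hA' (compound k Ainv) I J, compound_mono hAinv (mapK π I) J,
      mapK_symm_mapK]
    show _ = if I = J then (0 : Rmax) else ⊥
    by_cases h : J = I
    · subst h
      rw [if_pos rfl, if_pos rfl, hDD J]
    · rw [if_neg h, if_neg fun hh => h hh.symm, WithBot.add_bot]
  · ext I J
    rw [tropMul_compound_left hAinv (compound k A) I J, compound_mono hA' (mapK π.symm I) J,
      mapK_mapK_symm]
    show _ = if I = J then (0 : Rmax) else ⊥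
    by_cases h : J = I
    · subst h
      rw [if_pos rfl, if_pos rfl, hDD' J]
    · rw [if_neg h, if_neg fun hh => h hh.symm, WithBot.add_bot]
end
end

section
/- Over the max-plus semiring, if A is a nonsingular n×n matrix over ℝ_max (per(A) > −∞), then for every k with 1 ≤ k ≤ n−1, per(A) + tr((A^∇)^{∧(n−k)}) ≥ tr(A^{∧k}), where tr denotes the tropical trace (maximum of the diagonal entries). -/
open Matrix

noncomputable section

/-! ### Auxiliary material: first-return maps of a permutation relative to a subset -/

open Finset

section FirstReturn

variable {α : Type*} [Fintype α] [DecidableEq α] (ρ : Equiv.Perm α) (C : Finset α)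

abbrev hitsC (x : α) : Prop := ∃ t, 0 < t ∧ (ρ ^ t) x ∈ C

open scoped Classical in
noncomputable def frC (x : α) : α :=
  if h : hitsC ρ C x then (ρ ^ (Nat.find h)) x else x

lemma hitsC_of_mem {x : α} (hx : x ∈ C) : hitsC ρ C x :=
  ⟨orderOf ρ, orderOf_pos ρ, by rw [pow_orderOf_eq_one]; simpa using hx⟩

lemma frC_mem {x : α} (h : hitsC ρ C x) : frC ρ C x ∈ C := by
  rw [frC, dif_pos h]; exact (Nat.find_spec h).2

lemma frC_step {x : α} (h : hitsC ρ C x) :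
    (ρ x ∈ C ∧ frC ρ C x = ρ x) ∨
    (ρ x ∉ C ∧ ∃ h' : hitsC ρ C (ρ x), frC ρ C (ρ x) = frC ρ C x) := by
  by_cases h1 : ρ x ∈ C
  · left
    refine ⟨h1, ?_⟩
    rw [frC, dif_pos h]
    have hle : Nat.find h ≤ 1 := Nat.find_le ⟨one_pos, by simpa [pow_one] using h1⟩
    have hge : 0 < Nat.find h := (Nat.find_spec h).1
    have h2 : Nat.find h = 1 := le_antisymm hle hge
    rw [h2, pow_one]
  · right
    have hs := Nat.find_spec h
    have hs2 : 2 ≤ Nat.find h := by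
      rcases Nat.lt_or_ge (Nat.find h) 2 with h2 | h2
      · exfalso
        have hne : Nat.find h ≠ 1 := by
          intro e
          rw [e, pow_one] at hs
          exact h1 hs.2
        have := hs.1
        omega
      · exact h2
    have hcomp : ∀ t : ℕ, (ρ ^ t) (ρ x) = (ρ ^ (t + 1)) x := by
      intro t
      rw [pow_succ, Equiv.Perm.mul_apply]
    have h' : hitsC ρ C (ρ x) := ⟨Nat.find h - 1, by omega, by
      rw [hcomp]
      have : Nat.find h - 1 + 1 = Nat.find h := by omega
      rw [this]; exact hs.2⟩
    refine ⟨h1, h', ?_⟩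
    rw [frC, dif_pos h', frC, dif_pos h]
    have key : Nat.find h' = Nat.find h - 1 := by
      have hle : Nat.find h' ≤ Nat.find h - 1 := Nat.find_le ⟨by omega, by
        rw [hcomp]
        have : Nat.find h - 1 + 1 = Nat.find h := by omega
        rw [this]; exact hs.2⟩
      have hnlt : ¬ (Nat.find h' < Nat.find h - 1) := by
        intro hlt
        have hspec := Nat.find_spec h'
        have hmem : (ρ ^ (Nat.find h' + 1)) x ∈ C := by
          rw [← hcomp]; exact hspec.2
        exact Nat.find_min h (by omega) ⟨by omega, hmem⟩
      omega
    rw [key, hcomp]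
    have he1 : Nat.find h - 1 + 1 = Nat.find h := by omega
    rw [he1]

lemma not_hitsC_step {x : α} (h : ¬ hitsC ρ C x) : ρ x ∉ C ∧ ¬ hitsC ρ C (ρ x) := by
  constructor
  · intro hc; exact h ⟨1, one_pos, by simpa [pow_one] using hc⟩
  · rintro ⟨t, ht, htc⟩
    refine h ⟨t + 1, by omega, ?_⟩
    rwa [pow_succ, Equiv.Perm.mul_apply]

private lemma frC_injOn_aux {j₁ j₂ : α} (h₁ : j₁ ∈ C)
    (hh₁ : hitsC ρ C j₁) (hh₂ : hitsC ρ C j₂) (hle : Nat.find hh₁ ≤ Nat.find hh₂)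
    (he : frC ρ C j₁ = frC ρ C j₂) : j₁ = j₂ := by
  rw [frC, dif_pos hh₁, frC, dif_pos hh₂] at he
  have hsplit : (ρ ^ Nat.find hh₂) j₂
      = (ρ ^ Nat.find hh₁) ((ρ ^ (Nat.find hh₂ - Nat.find hh₁)) j₂) := by
    rw [← Equiv.Perm.mul_apply, ← pow_add]
    congr 2
    omega
  have hkey : j₁ = (ρ ^ (Nat.find hh₂ - Nat.find hh₁)) j₂ := by
    apply (Equiv.injective (ρ ^ Nat.find hh₁))
    rw [← hsplit, he]
  by_cases hd : Nat.find hh₂ - Nat.find hh₁ = 0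
  · rw [hd, pow_zero] at hkey
    simpa using hkey
  · exfalso
    have hpos := (Nat.find_spec hh₁).1
    refine Nat.find_min hh₂ (show Nat.find hh₂ - Nat.find hh₁ < Nat.find hh₂ by omega)
      ⟨by omega, ?_⟩
    rw [← hkey]; exact h₁

lemma frC_injOn {j₁ j₂ : α} (h₁ : j₁ ∈ C) (h₂ : j₂ ∈ C)
    (he : frC ρ C j₁ = frC ρ C j₂) : j₁ = j₂ := by
  have hh₁ := hitsC_of_mem ρ C h₁
  have hh₂ := hitsC_of_mem ρ C h₂
  rcases le_total (Nat.find hh₁) (Nat.find hh₂) with hle | hle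
  · exact frC_injOn_aux ρ C h₁ hh₁ hh₂ hle he
  · exact (frC_injOn_aux ρ C h₂ hh₂ hh₁ hle he.symm).symm

variable (j₀ : α)

open scoped Classical in
noncomputable def SsetC (j : α) : Finset α :=
  univ.filter (fun x => x ∉ C ∧
    ((hitsC ρ C x ∧ frC ρ C x = frC ρ C j) ∨ (¬ hitsC ρ C x ∧ j = j₀)))

lemma mem_SsetC {j x : α} : x ∈ SsetC ρ C j₀ j ↔ x ∉ C ∧
    ((hitsC ρ C x ∧ frC ρ C x = frC ρ C j) ∨ (¬ hitsC ρ C x ∧ j = j₀)) := by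
  classical
  simp [SsetC]

lemma SsetC_not_mem {j x : α} (hx : x ∈ SsetC ρ C j₀ j) : x ∉ C :=
  (mem_SsetC ρ C j₀ |>.mp hx).1

lemma SsetC_step {j x : α} (hx : x ∈ SsetC ρ C j₀ j) :
    ρ x ∈ SsetC ρ C j₀ j ∨ ρ x = frC ρ C j := by
  rw [mem_SsetC] at hx
  obtain ⟨hxC, hcase⟩ := hx
  rcases hcase with ⟨hh, hfr⟩ | ⟨hnh, hj⟩
  · rcases frC_step ρ C hh with ⟨h1, h2⟩ | ⟨h1, h', h2⟩
    · right; rw [← h2]; exact hfr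
    · left
      rw [mem_SsetC]
      exact ⟨h1, Or.inl ⟨h', by rw [h2]; exact hfr⟩⟩
  · have hstep := not_hitsC_step ρ C hnh
    left
    rw [mem_SsetC]
    exact ⟨hstep.1, Or.inr ⟨hstep.2, hj⟩⟩

lemma SsetC_self {j : α} (hj : j ∈ C) :
    ρ j ∈ SsetC ρ C j₀ j ∨ ρ j = frC ρ C j := by
  have hh := hitsC_of_mem ρ C hj
  rcases frC_step ρ C hh with ⟨h1, h2⟩ | ⟨h1, h', h2⟩
  · right; exact h2.symm
  · left
    rw [mem_SsetC]
    exact ⟨h1, Or.inl ⟨h', h2⟩⟩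

lemma SsetC_disjoint {j j' x : α} (hj : j ∈ C) (hj' : j' ∈ C)
    (hx : x ∈ SsetC ρ C j₀ j) (hx' : x ∈ SsetC ρ C j₀ j') : j = j' := by
  rw [mem_SsetC] at hx hx'
  rcases hx.2 with ⟨hh, hfr⟩ | ⟨hnh, he⟩
  · rcases hx'.2 with ⟨_, hfr'⟩ | ⟨hnh', _⟩
    · exact frC_injOn ρ C hj hj' (hfr.symm.trans hfr')
    · exact absurd hh hnh'
  · rcases hx'.2 with ⟨hh', _⟩ | ⟨_, he'⟩
    · exact absurd hh' hnh
    · rw [he, he']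

end FirstReturn

/-! ### Small helper lemmas about `Rmax` -/

lemma rmax_coe_nsmul (t : ℕ) (x : ℝ) : (t • ((x : ℝ) : Rmax)) = (((t • x : ℝ)) : Rmax) := by
  induction t with
  | zero => simp
  | succ t ih => rw [succ_nsmul, succ_nsmul, ih, ← WithBot.coe_add]

lemma rmax_add_cancel {a b : Rmax} (c : ℝ) (h : a + (c : Rmax) ≤ b + (c : Rmax)) : a ≤ b :=
  (WithBot.add_le_add_iff_right (by exact WithBot.coe_ne_bot)).mp h

lemma sum_erase_univ_eq {n : ℕ} (a : Fin (n + 1)) (g : Fin (n + 1) → Rmax) :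
    ∑ x ∈ Finset.univ.erase a, g x = ∑ i : Fin n, g (a.succAbove i) := by
  have h1 : ∑ x ∈ Finset.univ.erase a, g x = ∑ x : {y : Fin (n + 1) // y ≠ a}, g x := by
    rw [Finset.sum_subtype]
    intro x
    simp [Finset.mem_erase]
  rw [h1, ← (finSuccAboveEquiv a).sum_comp (fun y : {y : Fin (n+1) // y ≠ a} => g y.1)]
  apply Finset.sum_congr rfl
  intro i _
  rw [finSuccAboveEquiv_apply]

/-! ### The main theorem -/

set_option maxHeartbeats 1000000 in
/-- for `A` nonsingular,
`per(A) + tr((A^∇)^{∧(n−k)}) ≥ tr(A^{∧k})`. -/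
theorem tropical_jacobi_trace {n : ℕ} (A : Matrix (Fin (n+1)) (Fin (n+1)) Rmax)
    (hA : ⊥ < tropPer A)
    (k : ℕ) (hk1 : 1 ≤ k) (hk2 : k ≤ n) :
    tropTrace (compound k A) ≤
      tropPer A + tropTrace (compound (n + 1 - k) (tropQInv A)) := by
  classical
  obtain ⟨p, hp⟩ := WithBot.ne_bot_iff_exists.mp (ne_of_gt hA)
  -- hp : ↑p = tropPer A
  obtain ⟨π, -, hπ⟩ := Finset.exists_mem_eq_sup (Finset.univ : Finset (Equiv.Perm (Fin (n+1))))
    Finset.univ_nonempty (fun σ : Equiv.Perm (Fin (n+1)) => ∑ i, A i (σ i))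
  have hPer : ∑ x, A x (π x) = (p : Rmax) := by
    rw [hp]; exact hπ.symm
  rw [tropTrace]
  refine Finset.sup_le ?_
  intro I _
  show (Finset.univ.sup fun σ : {x // x ∈ I.1} ≃ {x // x ∈ I.1} =>
      ∑ i : {x // x ∈ I.1}, A i.1 (σ i).1) ≤ _
  refine Finset.sup_le ?_
  intro σ _
  -- setup
  set C : Finset (Fin (n+1)) := I.1ᶜ with hC
  have hCcard : C.card = n + 1 - k := by
    rw [hC, Finset.card_compl, I.2, Fintype.card_fin]
  have hCne : C.Nonempty := Finset.card_pos.mp (by omega)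
  obtain ⟨j₀, hj₀⟩ := hCne
  set σh : Equiv.Perm (Fin (n+1)) := Equiv.Perm.ofSubtype σ with hσh
  set ρ : Equiv.Perm (Fin (n+1)) := π⁻¹ * σh with hρ
  have hσmem : ∀ x (hx : x ∈ I.1), σh x = (σ ⟨x, hx⟩).1 := by
    intro x hx
    rw [hσh]
    rw [Equiv.Perm.ofSubtype_apply_of_mem σ hx]
  have hσnot : ∀ x, x ∉ I.1 → σh x = x := by
    intro x hx
    rw [hσh]
    exact Equiv.Perm.ofSubtype_apply_of_not_mem σ hx
  have hπρ : ∀ x, π (ρ x) = σh x := by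
    intro x
    rw [hρ]
    simp [Equiv.Perm.mul_apply]
  -- first-return bijection on C
  have hfrmem : ∀ j ∈ C, frC ρ C j ∈ C := fun j hj => frC_mem ρ C (hitsC_of_mem ρ C hj)
  have hτbij : Function.Bijective
      (fun j : {x // x ∈ C} => (⟨frC ρ C j.1, hfrmem j.1 j.2⟩ : {x // x ∈ C})) := by
    apply Finite.injective_iff_bijective.mp
    intro a b hab
    exact Subtype.ext (frC_injOn ρ C a.2 b.2 (congrArg Subtype.val hab))
  set τ : Equiv.Perm {x // x ∈ C} := Equiv.ofBijective _ hτbij with hτ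
  have hfrsurj : ∀ y ∈ C, ∃ j ∈ C, frC ρ C j = y := by
    intro y hy
    obtain ⟨j, hj⟩ := hτbij.2 ⟨y, hy⟩
    exact ⟨j.1, j.2, congrArg Subtype.val hj⟩
  -- owners
  have howner : ∀ x : Fin (n+1), ∃ j, (j ∈ C ∧ (x ∈ SsetC ρ C j₀ j ∨ x = frC ρ C j)) ∧
      ∀ j', j' ∈ C → (x ∈ SsetC ρ C j₀ j' ∨ x = frC ρ C j') → j' = j := by
    intro x
    by_cases hxC : x ∈ C
    · obtain ⟨j, hj, hfrj⟩ := hfrsurj x hxC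
      refine ⟨j, ⟨hj, Or.inr hfrj.symm⟩, ?_⟩
      intro j' hj' hj'cases
      rcases hj'cases with hS | hfr'
      · exact absurd hxC (SsetC_not_mem ρ C j₀ hS)
      · exact frC_injOn ρ C hj' hj (hfr'.symm.trans hfrj.symm)
    · by_cases hh : hitsC ρ C x
      · have hfx : frC ρ C x ∈ C := frC_mem ρ C hh
        obtain ⟨j, hj, hfrj⟩ := hfrsurj (frC ρ C x) hfx
        refine ⟨j, ⟨hj, Or.inl ?_⟩, ?_⟩
        · rw [mem_SsetC]
          exact ⟨hxC, Or.inl ⟨hh, hfrj.symm⟩⟩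
        · intro j' hj' hj'cases
          rcases hj'cases with hS | hfr'
          · rw [mem_SsetC] at hS
            rcases hS.2 with ⟨_, hfr2⟩ | ⟨hnh, _⟩
            · exact frC_injOn ρ C hj' hj (hfr2.symm.trans hfrj.symm)
            · exact absurd hh hnh
          · exfalso
            exact hxC (hfr' ▸ hfrmem j' hj')
      · refine ⟨j₀, ⟨hj₀, Or.inl ?_⟩, ?_⟩
        · rw [mem_SsetC]
          exact ⟨hxC, Or.inr ⟨hh, rfl⟩⟩
        · intro j' hj' hj'cases
          rcases hj'cases with hS | hfr'
          · rw [mem_SsetC] at hS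
            rcases hS.2 with ⟨hh', _⟩ | ⟨_, he'⟩
            · exact absurd hh' hh
            · exact he'
          · exfalso
            exact hxC (hfr' ▸ hfrmem j' hj')

  -- the partial permutations and their weights
  set θf : Fin (n+1) → Fin (n+1) → Fin (n+1) :=
    fun j x => if x ∈ SsetC ρ C j₀ j then σh x else π x with hθf
  set W : Fin (n+1) → Rmax :=
    fun j => ∑ x ∈ Finset.univ.erase (frC ρ C j), A x (θf j x) with hW
  set Kf : Fin (n+1) → Fin (n+1) → Rmax :=
    fun j x => if x ∈ SsetC ρ C j₀ j then A x (σh x)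
      else if x = frC ρ C j then 0 else A x (π x) with hKf
  have hWK : ∀ j ∈ C, W j = ∑ x, Kf j x := by
    intro j hj
    have hnotS : frC ρ C j ∉ SsetC ρ C j₀ j :=
      fun hmem => (SsetC_not_mem ρ C j₀ hmem) (hfrmem j hj)
    have h0 : Kf j (frC ρ C j) = 0 := by
      simp only [hKf]
      rw [if_neg hnotS]
      simp
    have hadd := Finset.add_sum_erase Finset.univ (Kf j) (Finset.mem_univ (frC ρ C j))
    rw [h0, zero_add] at hadd
    simp only [hW]
    rw [← hadd]
    apply Finset.sum_congr rfl
    intro x hx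
    rw [Finset.mem_erase] at hx
    simp only [hθf, hKf]
    by_cases hxS : x ∈ SsetC ρ C j₀ j
    · rw [if_pos hxS, if_pos hxS]
    · rw [if_neg hxS, if_neg hxS, if_neg hx.1]
  have hcount : ∀ x, ∑ j ∈ C, Kf j x
      = (if x ∈ I.1 then A x (σh x) else 0) + (n - k) • A x (π x) := by
    intro x
    obtain ⟨jx, ⟨hjxC, hjxcase⟩, hjxuniq⟩ := howner x
    rw [← Finset.add_sum_erase C (fun j => Kf j x) hjxC]
    have herase : ∀ j' ∈ C.erase jx, Kf j' x = A x (π x) := by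
      intro j' hj'
      rw [Finset.mem_erase] at hj'
      have hnot : ¬ (x ∈ SsetC ρ C j₀ j' ∨ x = frC ρ C j') := by
        intro hcase
        exact hj'.1 (hjxuniq j' hj'.2 hcase)
      push_neg at hnot
      simp only [hKf]
      rw [if_neg hnot.1, if_neg hnot.2]
    rw [Finset.sum_congr rfl herase, Finset.sum_const, Finset.card_erase_of_mem hjxC, hCcard]
    have hcard : n + 1 - k - 1 = n - k := by omega
    rw [hcard]
    congr 1
    by_cases hxI : x ∈ I.1
    · have hxC : x ∉ C := by rw [hC]; simp [hxI]
      have hxS : x ∈ SsetC ρ C j₀ jx := by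
        rcases hjxcase with h | h
        · exact h
        · exact absurd (h ▸ hfrmem jx hjxC) hxC
      simp only [hKf]
      rw [if_pos hxS, if_pos hxI]
    · have hxC : x ∈ C := by rw [hC]; simpa using hxI
      have hxS : x ∉ SsetC ρ C j₀ jx := fun hm => (SsetC_not_mem ρ C j₀ hm) hxC
      have hxfr : x = frC ρ C jx := by
        rcases hjxcase with h | h
        · exact absurd h hxS
        · exact h
      simp only [hKf]
      rw [if_neg hxS, if_pos hxfr, if_neg hxI]
  have hsumW : ∑ j ∈ C, W j = (∑ x ∈ I.1, A x (σh x)) + (n - k) • ((p : ℝ) : Rmax) := by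
    rw [Finset.sum_congr rfl hWK, Finset.sum_comm,
      Finset.sum_congr rfl (fun x _ => hcount x), Finset.sum_add_distrib]
    congr 1
    · rw [Finset.sum_ite_mem Finset.univ I.1 (fun x => A x (σh x)), Finset.univ_inter]
    · rw [← Finset.smul_sum, hPer]
  -- each weight is bounded by the corresponding adjoint entry
  have hWadj : ∀ j ∈ C, W j ≤ tropAdj A j (frC ρ C j) := by
    intro j hj
    have hjI : j ∉ I.1 := by rw [hC] at hj; simpa using hj
    have hσhj : σh j = j := hσnot j hjI
    have hπρj : π (ρ j) = j := by rw [hπρ, hσhj]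
    have hθform : ∀ x, θf j x = π (if x ∈ SsetC ρ C j₀ j then ρ x else x) := by
      intro x
      simp only [hθf]
      by_cases hxS : x ∈ SsetC ρ C j₀ j
      · rw [if_pos hxS, if_pos hxS, hπρ]
      · rw [if_neg hxS, if_neg hxS]
    have hne : ∀ x, x ≠ frC ρ C j → θf j x ≠ j := by
      intro x hx hcon
      rw [hθform] at hcon
      have hcon' : (if x ∈ SsetC ρ C j₀ j then ρ x else x) = ρ j :=
        π.injective (hcon.trans hπρj.symm)
      by_cases hxS : x ∈ SsetC ρ C j₀ j
      · rw [if_pos hxS] at hcon'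
        exact (SsetC_not_mem ρ C j₀ hxS) ((ρ.injective hcon') ▸ hj)
      · rw [if_neg hxS] at hcon'
        rcases SsetC_self ρ C j₀ hj with h | h
        · exact hxS (hcon' ▸ h)
        · exact hx (hcon' ▸ h)
    have hinj : ∀ x y, x ≠ frC ρ C j → y ≠ frC ρ C j → θf j x = θf j y → x = y := by
      intro x y hx hy hxy
      rw [hθform, hθform] at hxy
      have h' : (if x ∈ SsetC ρ C j₀ j then ρ x else x)
          = (if y ∈ SsetC ρ C j₀ j then ρ y else y) := π.injective hxy
      by_cases hxS : x ∈ SsetC ρ C j₀ j <;> by_cases hyS : y ∈ SsetC ρ C j₀ j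
      · rw [if_pos hxS, if_pos hyS] at h'
        exact ρ.injective h'
      · rw [if_pos hxS, if_neg hyS] at h'
        exfalso
        rcases SsetC_step ρ C j₀ hxS with hin | heq
        · exact hyS (h' ▸ hin)
        · exact hy (h' ▸ heq)
      · rw [if_neg hxS, if_pos hyS] at h'
        exfalso
        rcases SsetC_step ρ C j₀ hyS with hin | heq
        · exact hxS (by rwa [← h'] at hin)
        · exact hx (by rw [h', heq])
      · rw [if_neg hxS, if_neg hyS] at h'
        exact h'
    have hne' : ∀ i : Fin n, θf j ((frC ρ C j).succAbove i) ≠ j :=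
      fun i => hne _ (Fin.succAbove_ne _ i)
    choose ψ hψ using fun i : Fin n => Fin.exists_succAbove_eq (hne' i)
    have hψinj : Function.Injective ψ := by
      intro a b hab
      have ha := hψ a
      rw [hab] at ha
      have hth : θf j ((frC ρ C j).succAbove a) = θf j ((frC ρ C j).succAbove b) := by
        rw [← ha, ← hψ b]
      exact Fin.succAbove_right_injective
        (hinj _ _ (Fin.succAbove_ne _ a) (Fin.succAbove_ne _ b) hth)
    set χ : Equiv.Perm (Fin n) := Equiv.ofBijective ψ (Finite.injective_iff_bijective.mp hψinj)
      with hχ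
    have hWχ : W j = ∑ i : Fin n,
        (A.submatrix (frC ρ C j).succAbove j.succAbove) i (χ i) := by
      simp only [hW]
      rw [sum_erase_univ_eq]
      apply Finset.sum_congr rfl
      intro i _
      rw [Matrix.submatrix_apply]
      congr 1
      exact (hψ i).symm
    rw [hWχ]
    have hadjdef : tropAdj A j (frC ρ C j) = Finset.univ.sup
        (fun χ' : Equiv.Perm (Fin n) =>
          ∑ i, (A.submatrix (frC ρ C j).succAbove j.succAbove) i (χ' i)) := rfl
    rw [hadjdef]
    exact Finset.le_sup (f := fun χ' : Equiv.Perm (Fin n) =>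
      ∑ i, (A.submatrix (frC ρ C j).succAbove j.succAbove) i (χ' i)) (Finset.mem_univ χ)
  -- adjoint vs quasi-inverse
  have hadj_eq : ∀ j j' : Fin (n+1),
      tropAdj A j j' = tropQInv A j j' + ((p : ℝ) : Rmax) := by
    intro j j'
    have h1 : tropQInv A j j' = tropAdj A j j' + ((-p : ℝ) : Rmax) := by
      simp only [tropQInv, Matrix.of_apply]
      rw [← hp, WithBot.unbotD_coe]
    rw [h1, add_assoc, ← WithBot.coe_add, neg_add_cancel, WithBot.coe_zero, add_zero]
  have hTle : ∑ j ∈ C, W j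
      ≤ (∑ j ∈ C, tropQInv A j (frC ρ C j)) + (n + 1 - k) • ((p : ℝ) : Rmax) := by
    calc ∑ j ∈ C, W j ≤ ∑ j ∈ C, tropAdj A j (frC ρ C j) := Finset.sum_le_sum hWadj
      _ = ∑ j ∈ C, (tropQInv A j (frC ρ C j) + ((p : ℝ) : Rmax)) :=
          Finset.sum_congr rfl (fun j _ => hadj_eq _ _)
      _ = _ := by rw [Finset.sum_add_distrib, Finset.sum_const, hCcard]
  have hmain : (∑ x ∈ I.1, A x (σh x)) + (n - k) • ((p : ℝ) : Rmax)
      ≤ ((∑ j ∈ C, tropQInv A j (frC ρ C j)) + ((p : ℝ) : Rmax))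
        + (n - k) • ((p : ℝ) : Rmax) := by
    rw [← hsumW]
    refine hTle.trans_eq ?_
    have hnk : n + 1 - k = (n - k) + 1 := by omega
    rw [hnk, succ_nsmul]
    abel
  have hfinal1 : (∑ x ∈ I.1, A x (σh x))
      ≤ (∑ j ∈ C, tropQInv A j (frC ρ C j)) + ((p : ℝ) : Rmax) := by
    rw [rmax_coe_nsmul] at hmain
    exact rmax_add_cancel _ hmain
  have hLHS : (∑ i : {x // x ∈ I.1}, A i.1 (σ i).1) = ∑ x ∈ I.1, A x (σh x) := by
    rw [← Finset.sum_coe_sort I.1 (fun x => A x (σh x))]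
    apply Finset.sum_congr rfl
    intro i _
    congr 1
    rw [hσmem i.1 i.2]
  have hTtrace : (∑ j ∈ C, tropQInv A j (frC ρ C j))
      ≤ tropTrace (compound (n + 1 - k) (tropQInv A)) := by
    have h1 : (∑ j ∈ C, tropQInv A j (frC ρ C j))
        = ∑ jj : {x // x ∈ C}, tropQInv A jj.1 ((τ jj).1) := by
      rw [← Finset.sum_coe_sort C (fun j => tropQInv A j (frC ρ C j))]
      exact Finset.sum_congr rfl (fun jj _ => rfl)
    rw [h1]
    have h2 : (∑ jj : {x // x ∈ C}, tropQInv A jj.1 ((τ jj).1))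
        ≤ compound (n + 1 - k) (tropQInv A) ⟨C, hCcard⟩ ⟨C, hCcard⟩ := by
      have hcompdef : compound (n + 1 - k) (tropQInv A) ⟨C, hCcard⟩ ⟨C, hCcard⟩
          = Finset.univ.sup (fun τ' : {x // x ∈ C} ≃ {x // x ∈ C} =>
              ∑ jj : {x // x ∈ C}, tropQInv A jj.1 ((τ' jj)).1) := rfl
      rw [hcompdef]
      exact Finset.le_sup (f := fun τ' : {x // x ∈ C} ≃ {x // x ∈ C} =>
        ∑ jj : {x // x ∈ C}, tropQInv A jj.1 ((τ' jj)).1) (Finset.mem_univ τ)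
    exact h2.trans (Finset.le_sup (f := fun J : KSub (n+1) (n+1-k) =>
      compound (n + 1 - k) (tropQInv A) J J) (Finset.mem_univ (⟨C, hCcard⟩ : KSub (n+1) (n+1-k))))
  calc (∑ i : {x // x ∈ I.1}, A i.1 (σ i).1) = ∑ x ∈ I.1, A x (σh x) := hLHS
    _ ≤ (∑ j ∈ C, tropQInv A j (frC ρ C j)) + ((p : ℝ) : Rmax) := hfinal1
    _ ≤ tropTrace (compound (n + 1 - k) (tropQInv A)) + ((p : ℝ) : Rmax) :=
        add_le_add_left hTtrace _
    _ = tropPer A + tropTrace (compound (n + 1 - k) (tropQInv A)) := by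
        rw [add_comm, hp]

end
end
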